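/- Let π^∧ and π^∨ be products of disjoint transpositions on {1,...,2α} such that both map odd numbers to even numbers and even numbers to odd numbers. Define π(k) = π^∧(k) for k odd and π(k) = π^∨(k) for k even. Then π is a permutation of {1,...,2α}, and the number of cycles of the product π^∧∘π^∨ equals twice the number of cycles of π. -/

import Mathlib

/-- Number of disjoint cycles (orbits, fixed points included) of a permutation. -/
noncomputable def cycleCount {m : ℕ} (f : Equiv.Perm (Fin m)) : ℕ :=
  Nat.card (Quotient (⟨f.SameCycle,
    ⟨fun x => Equiv.Perm.SameCycle.refl f x, fun h => h.symm, fun h h' => h.trans h'⟩⟩ :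
    Setoid (Fin m)))

/-- Let π^∧ and π^∨ be products of disjoint transpositions on {1,…,2α}
(involutions without fixed points) mapping odd numbers to even numbers and vice
versa.  Here points are encoded by `Fin (2α)`, point `k` representing the number
`k+1`, so "odd" means `k.val % 2 = 0`.  Then the combination (upper partner on odd
points, lower partner on even points) is a permutation π, and the number of cycles
of π^∧ ∘ π^∨ is twice the number of cycles of π. -/
theorem meander_permutation_cycles (α : ℕ) (πa πb : Equiv.Perm (Fin (2 * α)))
    (hainv : πa * πa = 1) (hbinv : πb * πb = 1)
    (hafix : ∀ k, πa k ≠ k) (hbfix : ∀ k, πb k ≠ k)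
    (hapar : ∀ k : Fin (2 * α), (πa k).val % 2 ≠ k.val % 2)
    (hbpar : ∀ k : Fin (2 * α), (πb k).val % 2 ≠ k.val % 2) :
    ∃ π : Equiv.Perm (Fin (2 * α)),
      (∀ k : Fin (2 * α), k.val % 2 = 0 → π k = πa k) ∧
      (∀ k : Fin (2 * α), k.val % 2 = 1 → π k = πb k) ∧
      cycleCount (πa * πb) = 2 * cycleCount π := by
  have hainv' : ∀ k, πa (πa k) = k := fun k => by
    have := congrArg (fun g : Equiv.Perm (Fin (2 * α)) => g k) hainv
    simpa using this
  have hbinv' : ∀ k, πb (πb k) = k := fun k => by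
    have := congrArg (fun g : Equiv.Perm (Fin (2 * α)) => g k) hbinv
    simpa using this
  -- parity helpers
  have hapar' : ∀ k : Fin (2 * α), (πa k).val % 2 = 1 - k.val % 2 := fun k => by
    have := hapar k; omega
  have hbpar' : ∀ k : Fin (2 * α), (πb k).val % 2 = 1 - k.val % 2 := fun k => by
    have := hbpar k; omega
  -- the permutation π
  set π : Equiv.Perm (Fin (2 * α)) :=
    { toFun := fun k => if k.val % 2 = 0 then πa k else πb k
      invFun := fun k => if k.val % 2 = 0 then πb k else πa k
      left_inv := by
        intro k
        by_cases hk : k.val % 2 = 0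
        · have h1 : (πa k).val % 2 = 1 := by have := hapar' k; omega
          simp [hk, h1, hainv']
        · have h1 : (πb k).val % 2 = 0 := by have := hbpar' k; omega
          simp [hk, h1, hbinv']
      right_inv := by
        intro k
        by_cases hk : k.val % 2 = 0
        · have h1 : (πb k).val % 2 = 1 := by have := hbpar' k; omega
          simp [hk, h1, hbinv']
        · have h1 : (πa k).val % 2 = 0 := by have := hapar' k; omega
          simp [hk, h1, hainv'] } with hπdef
  have hπ0 : ∀ k : Fin (2 * α), k.val % 2 = 0 → π k = πa k := by
    intro k hk; simp [hπdef, Equiv.coe_fn_mk, hk]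
  have hπ1 : ∀ k : Fin (2 * α), k.val % 2 = 1 → π k = πb k := by
    intro k hk; simp [hπdef, Equiv.coe_fn_mk, hk]
  refine ⟨π, hπ0, hπ1, ?_⟩
  set f : Equiv.Perm (Fin (2 * α)) := πa * πb with hfdef
  have hfapp : ∀ k, f k = πa (πb k) := fun k => rfl
  -- parity facts
  have hPπ : ∀ x : Fin (2 * α), (π x).val % 2 = 1 - x.val % 2 := by
    intro x
    by_cases hx : x.val % 2 = 0
    · rw [hπ0 x hx, hapar']
    · have hx1 : x.val % 2 = 1 := by omega
      rw [hπ1 x hx1, hbpar']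
  have hPf : ∀ x : Fin (2 * α), (f x).val % 2 = x.val % 2 := by
    intro x
    rw [hfapp, hapar', hbpar']
    have : x.val % 2 < 2 := Nat.mod_lt _ (by norm_num)
    omega
  have hPfinv : ∀ x : Fin (2 * α), (f⁻¹ x).val % 2 = x.val % 2 := by
    intro x
    have := hPf (f⁻¹ x)
    rw [show f (f⁻¹ x) = x from f.apply_symm_apply x] at this
    exact this.symm
  have hPπ2 : ∀ x : Fin (2 * α), ((π * π) x).val % 2 = x.val % 2 := by
    intro x
    have h1 := hPπ x
    have h2 := hPπ (π x)
    have h3 : x.val % 2 < 2 := Nat.mod_lt _ (by norm_num)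
    show (π (π x)).val % 2 = x.val % 2
    omega
  -- f versus π² on the two parity classes
  have h1 : ∀ x : Fin (2 * α), x.val % 2 = 1 → f x = (π * π) x := by
    intro x hx
    show f x = π (π x)
    rw [hπ1 x hx, hπ0 _ (by rw [← hπ1 x hx, hPπ x]; omega), hfapp]
  have h0 : ∀ x : Fin (2 * α), x.val % 2 = 0 → (π * π) x = f⁻¹ x := by
    intro x hx
    have hfinv : f⁻¹ x = πb (πa x) := by
      have h' : f (πb (πa x)) = x := by rw [hfapp, hbinv', hainv']
      have h'' := congrArg (⇑f⁻¹) h'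
      simpa using h''.symm
    show π (π x) = f⁻¹ x
    rw [hπ0 x hx, hπ1 _ (by rw [← hπ0 x hx, hPπ x]; omega), hfinv]
  -- iterated parity facts
  have Lpar2 : ∀ (n : ℕ) (x : Fin (2 * α)), (((π * π) ^ n) x).val % 2 = x.val % 2 := by
    intro n
    induction n with
    | zero => intro x; simp
    | succ n ih =>
      intro x
      rw [pow_succ']
      show ((π * π) (((π * π) ^ n) x)).val % 2 = x.val % 2
      rw [hPπ2, ih]
  have Lparf : ∀ (n : ℕ) (x : Fin (2 * α)), ((f ^ n) x).val % 2 = x.val % 2 := by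
    intro n
    induction n with
    | zero => intro x; simp
    | succ n ih =>
      intro x
      rw [pow_succ']
      show (f ((f ^ n) x)).val % 2 = x.val % 2
      rw [hPf, ih]
  have Lparfinv : ∀ (n : ℕ) (x : Fin (2 * α)), ((f⁻¹ ^ n) x).val % 2 = x.val % 2 := by
    intro n
    induction n with
    | zero => intro x; simp
    | succ n ih =>
      intro x
      rw [pow_succ']
      show (f⁻¹ ((f⁻¹ ^ n) x)).val % 2 = x.val % 2
      rw [hPfinv, ih]
  have Lparπ : ∀ (n : ℕ) (x : Fin (2 * α)), ((π ^ n) x).val % 2 = (x.val + n) % 2 := by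
    intro n
    induction n with
    | zero => intro x; simp
    | succ n ih =>
      intro x
      rw [pow_succ']
      show (π ((π ^ n) x)).val % 2 = (x.val + (n + 1)) % 2
      rw [hPπ, ih]
      omega
  -- iterated versions of h1 and h0
  have L1 : ∀ (n : ℕ) (x : Fin (2 * α)), x.val % 2 = 1 → (f ^ n) x = ((π * π) ^ n) x := by
    intro n
    induction n with
    | zero => intro x _; simp
    | succ n ih =>
      intro x hx
      rw [pow_succ', pow_succ']
      show f ((f ^ n) x) = (π * π) (((π * π) ^ n) x)
      rw [ih x hx, h1 _ (by rw [Lpar2]; exact hx)]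
  have L0 : ∀ (n : ℕ) (x : Fin (2 * α)), x.val % 2 = 0 → ((π * π) ^ n) x = (f⁻¹ ^ n) x := by
    intro n
    induction n with
    | zero => intro x _; simp
    | succ n ih =>
      intro x hx
      rw [pow_succ', pow_succ']
      show (π * π) (((π * π) ^ n) x) = f⁻¹ ((f⁻¹ ^ n) x)
      rw [ih x hx, h0 _ (by rw [Lparfinv]; exact hx)]
  -- key cycle correspondences
  have key_fwd : ∀ x y : Fin (2 * α),
      f.SameCycle x y → π.SameCycle x y ∧ x.val % 2 = y.val % 2 := by
    intro x y h
    obtain ⟨n, -, hn⟩ := h.exists_pow_eq'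
    have hpar : x.val % 2 = y.val % 2 := by rw [← hn, Lparf]
    refine ⟨?_, hpar⟩
    by_cases hx : x.val % 2 = 0
    · have hy : y.val % 2 = 0 := by omega
      have hinv : (f⁻¹ ^ n) y = x := by
        rw [inv_pow]
        have := congrArg (⇑(f ^ n)⁻¹) hn
        simpa using this.symm
      have hππ : ((π * π) ^ n) y = x := by rw [L0 n y hy, hinv]
      refine (Equiv.Perm.SameCycle.symm ?_)
      exact ⟨(2 * n : ℕ), by
        rw [zpow_natCast, pow_mul, sq]
        exact hππ⟩
    · have hx1 : x.val % 2 = 1 := by omega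
      have hππ : ((π * π) ^ n) x = y := by rw [← L1 n x hx1, hn]
      exact ⟨(2 * n : ℕ), by rw [zpow_natCast, pow_mul, sq]; exact hππ⟩
  have key_bwd : ∀ x y : Fin (2 * α),
      π.SameCycle x y → x.val % 2 = y.val % 2 → f.SameCycle x y := by
    intro x y h hpar
    obtain ⟨n, -, hn⟩ := h.exists_pow_eq'
    have hparn := Lparπ n x
    rw [hn] at hparn
    have hneven : n % 2 = 0 := by omega
    obtain ⟨m, rfl⟩ : ∃ m, n = 2 * m := ⟨n / 2, by omega⟩
    have hππ : ((π * π) ^ m) x = y := by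
      rw [← hn, pow_mul, sq]
    by_cases hx : x.val % 2 = 0
    · have hfm : (f⁻¹ ^ m) x = y := by rw [← L0 m x hx, hππ]
      exact ⟨-(m : ℤ), by
        rw [zpow_neg, zpow_natCast, ← inv_pow]
        exact hfm⟩
    · have hx1 : x.val % 2 = 1 := by omega
      have hfm : (f ^ m) x = y := by rw [L1 m x hx1, hππ]
      exact ⟨(m : ℤ), by rw [zpow_natCast]; exact hfm⟩
  -- the setoids
  let sf : Setoid (Fin (2 * α)) := ⟨f.SameCycle,
    ⟨fun x => Equiv.Perm.SameCycle.refl f x, fun h => h.symm, fun h h' => h.trans h'⟩⟩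
  let sπ : Setoid (Fin (2 * α)) := ⟨π.SameCycle,
    ⟨fun x => Equiv.Perm.SameCycle.refl π x, fun h => h.symm, fun h h' => h.trans h'⟩⟩
  show Nat.card (Quotient sf) = 2 * Nat.card (Quotient sπ)
  -- the bijection between f-cycles and (π-cycles × Bool)
  have e : Quotient sf ≃ Quotient sπ × Bool := by
    refine Equiv.ofBijective
      (Quotient.lift
        (fun x : Fin (2 * α) => ((Quotient.mk sπ x : Quotient sπ), decide (x.val % 2 = 0)))
        ?_) ⟨?_, ?_⟩
    · intro x y hxy
      obtain ⟨hc, hp⟩ := key_fwd x y hxy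
      exact Prod.ext (Quotient.sound hc)
        (by show decide (x.val % 2 = 0) = decide (y.val % 2 = 0); rw [hp])
    · intro q q'
      refine Quotient.inductionOn₂ q q' ?_
      intro x y h
      simp only [Quotient.lift_mk, Prod.mk.injEq] at h
      obtain ⟨h1', h2'⟩ := h
      have hc : π.SameCycle x y := Quotient.exact h1'
      have hp : x.val % 2 = y.val % 2 := by
        have hd := decide_eq_decide.mp h2'
        by_cases hx : x.val % 2 = 0
        · have := hd.mp hx; omega
        · have : ¬ y.val % 2 = 0 := fun hy => hx (hd.mpr hy)
          omega
      exact Quotient.sound (key_bwd x y hc hp)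
    · rintro ⟨q, b⟩
      refine Quotient.inductionOn q ?_
      intro x
      by_cases hb : decide (x.val % 2 = 0) = b
      · exact ⟨Quotient.mk sf x, by simp [hb]⟩
      · refine ⟨Quotient.mk sf (π x), ?_⟩
        simp only [Quotient.lift_mk, Prod.mk.injEq]
        constructor
        · exact Quotient.sound
            (Equiv.Perm.SameCycle.symm (⟨(1 : ℤ), by rw [zpow_one]⟩ : π.SameCycle x (π x)))
        · have hflip := hPπ x
          have hx2 : x.val % 2 < 2 := Nat.mod_lt _ (by norm_num)
          cases b with
          | false =>
            have hx0 : x.val % 2 = 0 := by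
              by_contra hcon
              exact hb (by simp [hcon])
            simp only [decide_eq_false_iff_not]
            omega
          | true =>
            have hx1 : ¬ x.val % 2 = 0 := by
              intro hcon
              exact hb (by simp [hcon])
            simp only [decide_eq_true_eq]
            omega
  rw [Nat.card_congr e, Nat.card_prod]
  have hcb : Nat.card Bool = 2 := by simp [Nat.card_eq_fintype_card]
  rw [hcb, Nat.mul_comm]
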